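/- The array variate skew normal density of Equation (10) integrates to one (case i = 2): Let A₁ be an invertible real m×m matrix, A₂ an invertible real n×n matrix, and M, Δ real m×n matrices. Identify a point X of the space (Fin m × Fin n) → ℝ with the m×n matrix X' given by X' i j = X (i,j), and set W = A₁⁻¹ · (X' − M) · (A₂⁻¹)ᵀ. Then ∫ over X : (Fin m × Fin n) → ℝ (with respect to the product Lebesgue measure) of |det A₁|^(−n) · |det A₂|^(−m) · ∏_{i,j} ( φ(W i j) · Φ(Δ i j · W i j) ) dX = 2^(−mn). Equivalently, f(X) = 2^(mn) · φ(X; M, A₁, A₂) · ∏_{i,j} Φ(Δ i j · W i j) is a probability density. -/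

import Mathlib

open MeasureTheory Matrix

/-- The error function `erf t = (2/√π) ∫₀ᵗ exp(−s²) ds`. -/
noncomputable def erf (t : ℝ) : ℝ :=
  (2 / Real.sqrt Real.pi) * ∫ s in (0 : ℝ)..t, Real.exp (-s ^ 2)

/-- The standard normal probability density function. -/
noncomputable def stdNormalPdf (z : ℝ) : ℝ :=
  Real.exp (-z ^ 2 / 2) / Real.sqrt (2 * Real.pi)

/-- The standard normal cumulative distribution function. -/
noncomputable def stdNormalCdf (t : ℝ) : ℝ :=
  (1 + erf (t / Real.sqrt 2)) / 2

open intervalIntegral Real Kronecker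

lemma continuous_erf : Continuous erf := by
  unfold erf
  exact continuous_const.mul (intervalIntegral.continuous_primitive
    (fun a b => ((continuous_exp.comp (by continuity)).intervalIntegrable a b)) 0)

lemma continuous_cdf : Continuous stdNormalCdf := by
  unfold stdNormalCdf
  exact (continuous_const.add (continuous_erf.comp (continuous_id.div_const _))).div_const 2

lemma continuous_pdf : Continuous stdNormalPdf := by
  unfold stdNormalPdf; fun_prop

lemma erf_neg (t : ℝ) : erf (-t) = - erf t := by
  unfold erf
  rw [← mul_neg]
  congr 1
  have h := intervalIntegral.integral_comp_neg (a := (0:ℝ)) (b := -t)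
    (f := fun u => Real.exp (-u ^ 2))
  simp only [neg_neg, neg_zero, neg_sq] at h
  rw [h, intervalIntegral.integral_symm]

lemma cdf_add_neg (t : ℝ) : stdNormalCdf t + stdNormalCdf (-t) = 1 := by
  unfold stdNormalCdf
  rw [neg_div, erf_neg]
  ring

lemma erf_le_one {t : ℝ} (ht : 0 ≤ t) : erf t ≤ 1 := by
  unfold erf
  have h1 : ∫ s in (0:ℝ)..t, Real.exp (-s ^ 2) ≤ Real.sqrt Real.pi / 2 := by
    rw [intervalIntegral.integral_of_le ht]
    have : ∫ s in Set.Ioc (0:ℝ) t, Real.exp (-s ^ 2)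
        ≤ ∫ s in Set.Ioi (0:ℝ), Real.exp (-s ^ 2) := by
      apply setIntegral_mono_set
      · have := integrable_exp_neg_mul_sq (one_pos (α := ℝ))
        simp only [neg_mul, one_mul] at this
        exact this.integrableOn
      · filter_upwards with x using (Real.exp_pos _).le
      · exact HasSubset.Subset.eventuallyLE Set.Ioc_subset_Ioi_self
    refine this.trans ?_
    have := integral_gaussian_Ioi (1:ℝ)
    simp only [neg_mul, one_mul, div_one] at this
    rw [this]
  have hpi : 0 < Real.sqrt Real.pi := Real.sqrt_pos.2 Real.pi_pos
  calc 2 / Real.sqrt Real.pi * ∫ s in (0:ℝ)..t, Real.exp (-s ^ 2)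
      ≤ 2 / Real.sqrt Real.pi * (Real.sqrt Real.pi / 2) := by
        apply mul_le_mul_of_nonneg_left h1 (by positivity)
    _ = 1 := by field_simp
lemma erf_nonneg {t : ℝ} (ht : 0 ≤ t) : 0 ≤ erf t := by
  unfold erf
  apply mul_nonneg (by positivity)
  apply intervalIntegral.integral_nonneg ht
  intro x _; positivity

lemma cdf_nonneg (t : ℝ) : 0 ≤ stdNormalCdf t := by
  rcases le_or_gt 0 t with h | h
  · unfold stdNormalCdf
    have := erf_nonneg (t := t / Real.sqrt 2) (by positivity)
    linarith
  · have h2 := cdf_add_neg t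
    have h3 : stdNormalCdf (-t) ≤ 1 := by
      unfold stdNormalCdf
      have := erf_le_one (t := -t / Real.sqrt 2)
        (div_nonneg (by linarith) (Real.sqrt_nonneg _))
      linarith
    linarith

lemma cdf_le_one (t : ℝ) : stdNormalCdf t ≤ 1 := by
  have h1 := cdf_add_neg t
  have h2 := cdf_nonneg (-t)
  linarith

lemma pdf_nonneg (t : ℝ) : 0 ≤ stdNormalPdf t := by unfold stdNormalPdf; positivity

lemma integrable_pdf : Integrable stdNormalPdf := by
  have h := (integrable_exp_neg_mul_sq (b := (1:ℝ)/2) (by norm_num)).mul_const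
    (Real.sqrt (2 * Real.pi))⁻¹
  refine h.congr ?_
  filter_upwards with x
  unfold stdNormalPdf
  rw [div_eq_mul_inv]
  congr 2
  ring

lemma integral_pdf : ∫ x, stdNormalPdf x = 1 := by
  unfold stdNormalPdf
  rw [MeasureTheory.integral_div]
  have := integral_gaussian ((1:ℝ)/2)
  have h2 : ∀ x : ℝ, -(1/2 : ℝ) * x ^ 2 = -x ^ 2 / 2 := fun x => by ring
  simp_rw [h2] at this
  rw [this, div_eq_one_iff_eq (by positivity)]
  congr 1
  ring

lemma integrable_kernel (c : ℝ) :
    Integrable fun w => stdNormalPdf w * stdNormalCdf (c * w) := by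
  apply integrable_pdf.mono
    ((continuous_pdf.mul (continuous_cdf.comp (continuous_const.mul continuous_id))).aestronglyMeasurable)
  filter_upwards with x
  simp only [Function.comp, id, Pi.mul_apply]
  rw [Real.norm_eq_abs, Real.norm_eq_abs, abs_of_nonneg (mul_nonneg (pdf_nonneg x) (cdf_nonneg _)), abs_of_nonneg (pdf_nonneg x)]
  nth_rewrite 2 [← mul_one (stdNormalPdf x)]
  exact mul_le_mul_of_nonneg_left (cdf_le_one _) (pdf_nonneg x)

lemma integral_kernel (c : ℝ) :
    ∫ w, stdNormalPdf w * stdNormalCdf (c * w) = 1/2 := by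
  have key : ∫ w, stdNormalPdf w * stdNormalCdf (c * w)
      = ∫ w, stdNormalPdf w * stdNormalCdf (-(c * w)) := by
    rw [← MeasureTheory.integral_neg_eq_self (fun w => stdNormalPdf w * stdNormalCdf (c * w)) volume]
    congr 1; ext w
    have : stdNormalPdf (-w) = stdNormalPdf w := by unfold stdNormalPdf; rw [neg_pow]; ring_nf
    rw [this, mul_neg]
  have hsum : (∫ w, stdNormalPdf w * stdNormalCdf (c * w))
      + ∫ w, stdNormalPdf w * stdNormalCdf (-(c * w)) = 1 := by
    rw [← integral_add (integrable_kernel c) ?_]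
    · rw [← integral_pdf]
      congr 1; ext w
      rw [← mul_add, cdf_add_neg, mul_one]
    · have := integrable_kernel (-c)
      simpa [neg_mul] using this
  rw [key] at hsum ⊢
  linarith [hsum]


/-- The array variate skew normal density integrates to one (i = 2):
with `W = A₁⁻¹(X−M)(A₂⁻¹)ᵀ`,
`∫ |det A₁|^(−n) |det A₂|^(−m) ∏ᵢⱼ φ(Wᵢⱼ) Φ(Δᵢⱼ Wᵢⱼ) dX = 2^(−mn)`. -/
theorem integral_matrixSkewNormal_kernel
    (m n : ℕ)
    (A₁ : Matrix (Fin m) (Fin m) ℝ) (hA₁ : IsUnit A₁.det)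
    (A₂ : Matrix (Fin n) (Fin n) ℝ) (hA₂ : IsUnit A₂.det)
    (M Δ : Matrix (Fin m) (Fin n) ℝ) :
    ∫ X : (Fin m × Fin n) → ℝ,
        |A₁.det| ^ (-(n : ℤ)) * |A₂.det| ^ (-(m : ℤ)) *
          ∏ i : Fin m, ∏ j : Fin n,
            (stdNormalPdf ((A₁⁻¹ * ((Matrix.of fun i j => X (i, j)) - M) * (A₂⁻¹)ᵀ) i j) *
              stdNormalCdf (Δ i j *
                (A₁⁻¹ * ((Matrix.of fun i j => X (i, j)) - M) * (A₂⁻¹)ᵀ) i j))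
      = (2 : ℝ) ^ (-(m * n : ℤ)) := by
  classical
  have hd1 : A₁.det ≠ 0 := hA₁.ne_zero
  have hd2 : A₂.det ≠ 0 := hA₂.ne_zero
  set B : Matrix (Fin m × Fin n) (Fin m × Fin n) ℝ := A₁⁻¹ ⊗ₖ A₂⁻¹ with hB
  set L : ((Fin m × Fin n) → ℝ) →ₗ[ℝ] ((Fin m × Fin n) → ℝ) := Matrix.toLin' B with hL
  have hdetL : LinearMap.det L = (A₁.det)⁻¹ ^ n * (A₂.det)⁻¹ ^ m := by
    rw [hL, LinearMap.det_toLin', hB, Matrix.det_kronecker, Matrix.det_nonsing_inv,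
      Matrix.det_nonsing_inv, Fintype.card_fin, Fintype.card_fin]
    simp [Ring.inverse_eq_inv']
  have hdetL_ne : LinearMap.det L ≠ 0 := by
    rw [hdetL]
    positivity
  set Mv : (Fin m × Fin n) → ℝ := fun p => M p.1 p.2 with hMv
  set h : (Fin m × Fin n) → ℝ → ℝ :=
    fun p w => stdNormalPdf w * stdNormalCdf (Δ p.1 p.2 * w) with hh
  set G : ((Fin m × Fin n) → ℝ) → ℝ := fun Y => ∏ p : Fin m × Fin n, h p (Y p) with hG
  have hW : ∀ (X : (Fin m × Fin n) → ℝ) (i : Fin m) (j : Fin n),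
      (A₁⁻¹ * ((Matrix.of fun i j => X (i, j)) - M) * (A₂⁻¹)ᵀ) i j
        = L (X - Mv) (i, j) := by
    intro X i j
    rw [hL, Matrix.toLin'_apply]
    simp only [Matrix.mulVec, dotProduct, hB, Matrix.kroneckerMap_apply,
      Matrix.mul_apply, Matrix.transpose_apply, Matrix.sub_apply, Matrix.of_apply,
      Fintype.sum_prod_type, Pi.sub_apply, hMv]
    rw [Finset.sum_comm]
    refine Finset.sum_congr rfl fun l _ => ?_
    rw [Finset.sum_mul]
    exact Finset.sum_congr rfl fun k _ => by ring
  have hGcont : Continuous G := by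
    rw [hG]
    refine continuous_finset_prod _ fun p _ => ?_
    exact (continuous_pdf.comp (continuous_apply p)).mul
      (continuous_cdf.comp (continuous_const.mul (continuous_apply p)))
  have step1 : ∀ X : (Fin m × Fin n) → ℝ,
      (∏ i : Fin m, ∏ j : Fin n,
        (stdNormalPdf ((A₁⁻¹ * ((Matrix.of fun i j => X (i, j)) - M) * (A₂⁻¹)ᵀ) i j) *
          stdNormalCdf (Δ i j *
            (A₁⁻¹ * ((Matrix.of fun i j => X (i, j)) - M) * (A₂⁻¹)ᵀ) i j)))
        = G (L (X - Mv)) := by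
    intro X
    rw [show G (L (X - Mv)) = ∏ p : Fin m × Fin n, h p (L (X - Mv) p) from rfl,
      Fintype.prod_prod_type]
    exact Finset.prod_congr rfl fun i _ => Finset.prod_congr rfl fun j _ => by
      rw [hW X i j]
  simp_rw [step1, MeasureTheory.integral_const_mul]
  have step2 : ∫ X : (Fin m × Fin n) → ℝ, G (L (X - Mv)) = ∫ X, G (L X) :=
    MeasureTheory.integral_sub_right_eq_self (fun X => G (L X)) Mv
  have step3 : ∫ X : (Fin m × Fin n) → ℝ, G (L X)
      = |(LinearMap.det L)⁻¹| * ∫ Y, G Y := by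
    have hmap := MeasureTheory.Measure.map_linearMap_addHaar_pi_eq_smul_addHaar hdetL_ne
      (volume : Measure ((Fin m × Fin n) → ℝ))
    have hmeas : Measurable L := L.continuous_of_finiteDimensional.measurable
    rw [← MeasureTheory.integral_map hmeas.aemeasurable
      (hGcont.aestronglyMeasurable), hmap, MeasureTheory.integral_smul_measure,
      ENNReal.toReal_ofReal (abs_nonneg _), smul_eq_mul]
  have step4 : ∫ Y : (Fin m × Fin n) → ℝ, G Y = (1/2 : ℝ) ^ (m * n) := by
    rw [hG]; beta_reduce; rw [MeasureTheory.volume_pi, MeasureTheory.integral_fintype_prod_eq_prod (ι := Fin m × Fin n) h]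
    have : ∀ p : Fin m × Fin n, ∫ w, h p w = (1/2 : ℝ) := fun p => integral_kernel _
    rw [Finset.prod_congr rfl fun p _ => this p, Finset.prod_const, Finset.card_univ,
      Fintype.card_prod, Fintype.card_fin, Fintype.card_fin]
  rw [step2, step3, step4, hdetL]
  have h1 : (0:ℝ) < |A₁.det| := abs_pos.2 hd1
  have h2 : (0:ℝ) < |A₂.det| := abs_pos.2 hd2
  rw [abs_inv, abs_mul, abs_pow, abs_pow, abs_inv, abs_inv]
  rw [_root_.zpow_neg, _root_.zpow_neg, zpow_natCast, zpow_natCast, _root_.zpow_neg,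
    show ((m:ℤ) * (n:ℤ)) = ((m * n : ℕ) : ℤ) by push_cast; ring, zpow_natCast,
    inv_pow, inv_pow, div_pow, one_pow]
  field_simp
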